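/- Let A(j) = |φ_j⟩⟨φ_j| be the sharp observable associated to the orthonormal basis {φ_j}. If à is a d-outcome observable (POVM on Z_d) satisfying U_x Ã(j) U_x* = Ã(j+x) and V_y Ã(j) V_y* = Ã(j) for all j, x, y ∈ Z_d, then there is a probability distribution Λ on Z_d such that Ã(j) = Σ_{i∈Z_d} Λ(j−i) A(i) for all j. -/

import Mathlib

open Matrix Kronecker Finset
open scoped ComplexOrder

/-- ω = e^{2πi/d} -/
noncomputable def ww (d : ℕ) : ℂ := Complex.exp (2 * Real.pi * Complex.I / d)

/-- shift unitary U_x φ_k = φ_{k+x} -/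
noncomputable def Um (d : ℕ) (x : ZMod d) : Matrix (ZMod d) (ZMod d) ℂ :=
  fun i j => if i = j + x then 1 else 0

/-- modulation unitary V_y φ_k = ω^{yk} φ_k -/
noncomputable def Vm (d : ℕ) (y : ZMod d) : Matrix (ZMod d) (ZMod d) ℂ :=
  Matrix.diagonal fun i => ww d ^ (y * i).val

/-- finite Fourier transform F φ_k = (1/√d) Σ_h ω^{-hk} φ_h -/
noncomputable def Fm (d : ℕ) : Matrix (ZMod d) (ZMod d) ℂ :=
  fun i j => (1 / Real.sqrt d : ℂ) * (ww d)⁻¹ ^ (i * j).val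

/-- the standard orthonormal basis vector φ_k -/
noncomputable def phiV (d : ℕ) (k : ZMod d) : ZMod d → ℂ := Pi.single k 1

/-- ψ_k = F* φ_k -/
noncomputable def psiV (d : ℕ) [NeZero d] (k : ZMod d) : ZMod d → ℂ :=
  (Fm d)ᴴ.mulVec (phiV d k)

/-- A(j) = |φ_j⟩⟨φ_j| -/
noncomputable def Aob (d : ℕ) (j : ZMod d) : Matrix (ZMod d) (ZMod d) ℂ :=
  vecMulVec (phiV d j) (star (phiV d j))

/-- B(k) = |ψ_k⟩⟨ψ_k| -/
noncomputable def Bob (d : ℕ) [NeZero d] (k : ZMod d) : Matrix (ZMod d) (ZMod d) ℂ :=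
  vecMulVec (psiV d k) (star (psiV d k))

theorem covariant_invariant_povm_is_smeared (d : ℕ) (hd : 2 ≤ d) [NeZero d]
    (At : ZMod d → Matrix (ZMod d) (ZMod d) ℂ)
    (hpos : ∀ j, (At j).PosSemidef) (hsum : ∑ j : ZMod d, At j = 1)
    (hU : ∀ j x : ZMod d, Um d x * At j * (Um d x)ᴴ = At (j + x))
    (hV : ∀ j y : ZMod d, Vm d y * At j * (Vm d y)ᴴ = At j) :
    ∃ Λ : ZMod d → ℝ, (∀ i, 0 ≤ Λ i) ∧ (∑ i : ZMod d, Λ i = 1) ∧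
      ∀ j, At j = ∑ i : ZMod d, (Λ (j - i) : ℂ) • Aob d i := by
  have hd0 : (d : ℕ) ≠ 0 := NeZero.ne d
  have hprim : IsPrimitiveRoot (ww d) d := Complex.isPrimitiveRoot_exp d hd0
  have hw0 : ww d ≠ 0 := hprim.ne_zero hd0
  have habs : ‖ww d‖ = 1 := by
    rw [ww, Complex.norm_exp, Real.exp_eq_one_iff]
    simp [Complex.div_re, Complex.mul_re, Complex.mul_im]
  have hstar : star (ww d) = (ww d)⁻¹ := (RCLike.inv_eq_conj habs).symm
  -- off-diagonal entries vanish
  have hdiag : ∀ j a b, a ≠ b → At j a b = 0 := by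
    intro j a b hab
    by_contra hM
    have h := congrFun (congrFun (hV j 1) a) b
    simp only [Vm, Matrix.diagonal_conjTranspose, Pi.star_def, Matrix.diagonal_mul,
      Matrix.mul_diagonal, one_mul] at h
    rw [star_pow, hstar] at h
    have h2 : ww d ^ a.val * At j a b = ww d ^ b.val * At j a b := by
      have hb : ww d ^ b.val ≠ 0 := pow_ne_zero _ hw0
      rw [inv_pow] at h
      rw [mul_inv_eq_iff_eq_mul₀ hb] at h
      linear_combination h
    have h3 : ww d ^ a.val = ww d ^ b.val := by
      exact mul_right_cancel₀ hM h2
    have := hprim.pow_inj (ZMod.val_lt a) (ZMod.val_lt b) h3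
    exact hab (ZMod.val_injective d this)
  -- multiplication by Um on entries
  have hUmul : ∀ (M : Matrix (ZMod d) (ZMod d) ℂ) (x a b : ZMod d),
      (Um d x * M) a b = M (a - x) b := by
    intro M x a b
    rw [Matrix.mul_apply, Finset.sum_eq_single (a - x)]
    · simp [Um]
    · intro k _ hk
      simp only [Um]
      rw [if_neg fun h => hk (by rw [h, add_sub_cancel_right]), zero_mul]
    · simp
  have hUmulr : ∀ (M : Matrix (ZMod d) (ZMod d) ℂ) (x a b : ZMod d),
      (M * (Um d x)ᴴ) a b = M a (b - x) := by
    intro M x a b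
    rw [Matrix.mul_apply, Finset.sum_eq_single (b - x)]
    · simp [Um, Matrix.conjTranspose_apply]
    · intro k _ hk
      simp only [Um, Matrix.conjTranspose_apply]
      rw [if_neg fun h => hk (by rw [h, add_sub_cancel_right]), star_zero, mul_zero]
    · simp
  -- shift identity
  have hshift : ∀ j a b, At j a b = At 0 (a - j) (b - j) := by
    intro j a b
    have h := hU 0 j
    rw [zero_add] at h
    have h2 := congrFun (congrFun h a) b
    rw [hUmulr, hUmul] at h2
    exact h2.symm
  -- diagonal entries nonneg
  have hnn : ∀ j a, 0 ≤ At j a a := by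
    intro j a
    exact (hpos j).diag_nonneg
  have hre : ∀ j a, At j a a = ((At j a a).re : ℂ) := by
    intro j a
    have h := hnn j a
    rw [Complex.le_def] at h
    exact Complex.ext rfl h.2.symm
  refine ⟨fun k => (At 0 (-k) (-k)).re, ?_, ?_, ?_⟩
  · intro i
    have h := hnn 0 (-i)
    rw [Complex.le_def] at h
    simpa using h.1
  · have h1 : ∑ j : ZMod d, At j 0 0 = 1 := by
      have := congrFun (congrFun hsum 0) 0
      simpa [Matrix.sum_apply, Matrix.one_apply] using this
    have h2 : ∀ j : ZMod d, At j 0 0 = At 0 (-j) (-j) := by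
      intro j; rw [hshift j 0 0, zero_sub]
    calc ∑ i : ZMod d, (At 0 (-i) (-i)).re = (∑ i : ZMod d, At 0 (-i) (-i)).re := by
          rw [Complex.re_sum]
      _ = (∑ i : ZMod d, At i 0 0).re := by
          congr 1; exact Finset.sum_congr rfl fun i _ => (h2 i).symm
      _ = 1 := by rw [h1]; simp
  · intro j
    ext a b
    rw [Matrix.sum_apply]
    rcases eq_or_ne a b with rfl | hab
    · rw [Finset.sum_eq_single a]
      · simp only [Matrix.smul_apply, Aob, vecMulVec_apply, phiV, Pi.single_apply, if_pos rfl,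
          Pi.star_apply, star_one, mul_one, smul_eq_mul]
        rw [hshift j a a, hre 0 (a - j), neg_sub]
        simp
      · intro i _ hi
        simp [Aob, vecMulVec_apply, phiV, Pi.single_apply, Ne.symm hi]
      · simp
    · rw [hdiag j a b hab]
      apply (Finset.sum_eq_zero _).symm
      intro i _
      rcases ne_or_eq a i with hai | rfl
      · simp [Aob, vecMulVec_apply, phiV, Pi.single_apply, hai]
      · simp [Aob, vecMulVec_apply, phiV, Pi.single_apply, Ne.symm hab]
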